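/- A path in Q is irreducible (i.e., contains no factor of consecutive arrows equal to one of q_i p_{i+1}, p_i q_{i−1}, s_i p_i, s_i q_i) if and only if it is of the form a_{j,i}s^α for some 0 ≤ i, j ≤ n and α ∈ ℕ, namely α loops s_i at the source vertex i followed by the strictly monotone run of arrows from vertex i to vertex j (all p's if j > i, all q's if j < i, and no further arrows if j = i). In particular the irreducible paths are in bijection with triples (j, i, α) ∈ {0,…,n} × {0,…,n} × ℕ. -/
import Mathlib


/-- The arrows of the KLRW quiver on vertices `{0, …, n}`:
`p i : i → i+1` and `q i : i+1 → i` (for `0 ≤ i < n`), and loops `s i : i → i`.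
(Here `p i` stands for the paper's `p_{i+1}` and `q i` for `q_i`.) -/
inductive Arrow (n : ℕ) where
  | p (i : Fin n)
  | q (i : Fin n)
  | s (i : Fin (n + 1))
deriving DecidableEq

namespace Arrow

/-- Source vertex of an arrow. -/
def src {n : ℕ} : Arrow n → Fin (n + 1)
  | .p i => i.castSucc
  | .q i => i.succ
  | .s i => i

/-- Target vertex of an arrow. -/
def tgt {n : ℕ} : Arrow n → Fin (n + 1)
  | .p i => i.succ
  | .q i => i.castSucc
  | .s i => i

end Arrow

/-- `RedPair b a` holds when the two-letter word `b·a` (with `a` applied first) is one of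
the reducible words `q_i p_{i+1}`, `p_i q_{i−1}`, `s_i p_i`, `s_i q_i` of the KLRW
reduction system.  Paths are written in word order (leftmost = last applied). -/
inductive RedPair {n : ℕ} : Arrow n → Arrow n → Prop where
  | qp (i : Fin n) : RedPair (.q i) (.p i)
  | pq (i : Fin n) : RedPair (.p i) (.q i)
  | sp (i : Fin n) : RedPair (.s i.succ) (.p i)
  | sq (i : Fin n) : RedPair (.s i.castSucc) (.q i)

/-- A word is irreducible if no left-hand side of the reduction system occurs as a factor
of consecutive arrows. -/
def Irred {n : ℕ} (u : List (Arrow n)) : Prop :=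
  List.Chain' (fun b a => ¬ RedPair b a) u

/-- A word is composable when consecutive arrows match (in word order, the arrow on the
right is applied first). -/
def Composable {n : ℕ} (u : List (Arrow n)) : Prop :=
  List.Chain' (fun b a => Arrow.src b = Arrow.tgt a) u

/-- A path based at the vertex `v`: a composable word whose first applied arrow (the last
letter of the word) starts at `v`. -/
def IsPathFrom {n : ℕ} (v : Fin (n + 1)) (u : List (Arrow n)) : Prop :=
  Composable u ∧ ∀ a ∈ u.getLast?, Arrow.src a = v

/-- `p`-arrow with natural-number index, when valid. -/
def pArr? (n t : ℕ) : Option (Arrow n) := if h : t < n then some (.p ⟨t, h⟩) else none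

/-- `q`-arrow with natural-number index, when valid. -/
def qArr? (n t : ℕ) : Option (Arrow n) := if h : t < n then some (.q ⟨t, h⟩) else none

/-- The canonical irreducible path `a_{j,i}s^α`: `α` loops `s_i` at the source vertex `i`
(applied first) followed by the strictly monotone run of arrows from `i` to `j`
(all `p`'s if `j > i`, all `q`'s if `j < i`); written in word order. -/
def canon (n : ℕ) (j i : Fin (n + 1)) (α : ℕ) : List (Arrow n) :=
  (if (i : ℕ) < (j : ℕ) then
      ((List.range' (i : ℕ) ((j : ℕ) - (i : ℕ))).reverse).filterMap (pArr? n)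
    else
      (List.range' (j : ℕ) ((i : ℕ) - (j : ℕ))).filterMap (qArr? n))
    ++ List.replicate α (.s i)

section Aux
open Arrow

variable {n : ℕ}

/-- Whether an arrow is a loop. -/
def isS : Arrow n → Bool
  | .s _ => true
  | _ => false

/-- Number of loops in a word. -/
def countS (u : List (Arrow n)) : ℕ := (u.filter isS).length

/-- Target vertex of a word based at `v` (the target of the last-applied arrow, i.e.
the head of the word, or `v` for the empty word). -/
def endV (v : Fin (n + 1)) (u : List (Arrow n)) : Fin (n + 1) :=
  match u.head? with
  | some a => a.tgt
  | none => v

@[simp] lemma endV_nil (v : Fin (n + 1)) : endV v ([] : List (Arrow n)) = v := rfl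
@[simp] lemma endV_cons (v : Fin (n + 1)) (a : Arrow n) (l : List (Arrow n)) :
    endV v (a :: l) = a.tgt := rfl

lemma endV_head (v : Fin (n + 1)) {u : List (Arrow n)} {b : Arrow n}
    (hb : b ∈ u.head?) : Arrow.tgt b = endV v u := by
  cases u with
  | nil => simp at hb
  | cons a l => simp [List.head?] at hb; subst hb; rfl

@[simp] lemma countS_nil : countS ([] : List (Arrow n)) = 0 := rfl
@[simp] lemma countS_cons_p (k : Fin n) (l : List (Arrow n)) :
    countS (.p k :: l) = countS l := by simp [countS, List.filter_cons, isS]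
@[simp] lemma countS_cons_q (k : Fin n) (l : List (Arrow n)) :
    countS (.q k :: l) = countS l := by simp [countS, List.filter_cons, isS]
@[simp] lemma countS_cons_s (k : Fin (n + 1)) (l : List (Arrow n)) :
    countS (.s k :: l) = countS l + 1 := by simp [countS, List.filter_cons, isS]

lemma canon_self (i : Fin (n + 1)) (α : ℕ) :
    canon n i i α = List.replicate α (.s i) := by
  simp [canon]

lemma canon_p (i : Fin (n + 1)) (j : ℕ) (hj : j < n) (hij : (i : ℕ) ≤ j) (α : ℕ) :
    canon n ⟨j + 1, by omega⟩ i α = .p ⟨j, hj⟩ :: canon n ⟨j, by omega⟩ i α := by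
  unfold canon
  simp only [Fin.val_mk] at *
  rcases eq_or_lt_of_le hij with h | h
  · rw [if_pos (by omega), if_neg (by omega)]
    have h1 : j + 1 - (i : ℕ) = 1 := by omega
    have h2 : (i : ℕ) - j = 0 := by omega
    rw [h1, h2]
    subst h
    simp [List.range', pArr?, hj]
  · rw [if_pos (by omega), if_pos h]
    have h1 : j + 1 - (i : ℕ) = (j - (i : ℕ)) + 1 := by omega
    rw [h1, List.range'_concat]
    have h2 : (i : ℕ) + 1 * (j - (i : ℕ)) = j := by omega
    rw [h2, List.reverse_append]
    simp [pArr?, hj]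

lemma canon_q (i : Fin (n + 1)) (j : ℕ) (hji : j < (i : ℕ)) (α : ℕ) :
    canon n ⟨j, by have := i.isLt; omega⟩ i α
      = .q ⟨j, by have := i.isLt; omega⟩ :: canon n ⟨j + 1, by have := i.isLt; omega⟩ i α := by
  have hjn : j < n := by have := i.isLt; omega
  unfold canon
  simp only [Fin.val_mk] at *
  rw [if_neg (by omega), if_neg (by omega)]
  have h1 : (i : ℕ) - j = ((i : ℕ) - (j + 1)) + 1 := by omega
  rw [h1, List.range'_succ]
  simp [qArr?, hjn]

/-- All the properties of a canonical word we need. -/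
structure Spec (v : Fin (n + 1)) (u : List (Arrow n)) (j : Fin (n + 1)) (α : ℕ) : Prop where
  comp : Composable u
  last : ∀ b ∈ u.getLast?, Arrow.src b = v
  irr : Irred u
  cnt : countS u = α
  endv : endV v u = j

lemma Spec.cons {v : Fin (n + 1)} {u : List (Arrow n)} {j : Fin (n + 1)} {α : ℕ}
    (h : Spec v u j α) (a : Arrow n) (hsrc : a.src = j)
    (hred : ∀ b ∈ u.head?, ¬ RedPair a b) {m : ℕ} (hm : countS (a :: u) = m) :
    Spec v (a :: u) a.tgt m := by
  refine ⟨?_, ?_, ?_, hm, rfl⟩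
  · refine List.isChain_cons.mpr ⟨fun b hb => ?_, h.comp⟩
    rw [hsrc, ← h.endv, ← endV_head v hb]
  · intro b hb
    cases u with
    | nil =>
      simp at hb
      subst hb
      rw [hsrc, ← h.endv]
      rfl
    | cons c l =>
      rw [List.getLast?_cons_cons] at hb
      exact h.last b hb
  · exact List.isChain_cons.mpr ⟨hred, h.irr⟩

lemma spec_rep (i : Fin (n + 1)) (α : ℕ) :
    Spec i (List.replicate α (.s i) : List (Arrow n)) i α := by
  induction α with
  | zero => exact ⟨List.isChain_nil, by simp, List.isChain_nil, rfl, rfl⟩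
  | succ α ih =>
    rw [List.replicate_succ]
    have hc := ih.cons (.s i) rfl (fun b hb hR => by
      cases α with
      | zero => simp at hb
      | succ β =>
        rw [List.replicate_succ] at hb
        simp at hb
        subst hb
        cases hR) (m := α + 1) (by simp [ih.cnt])
    exact hc

lemma head_rep (i : Fin (n + 1)) (α : ℕ) :
    ∀ b ∈ (List.replicate α (.s i) : List (Arrow n)).head?,
      ((∃ k, b = Arrow.p k) ∨ ∃ k, b = Arrow.s k) ∧ ((∃ k, b = Arrow.q k) ∨ ∃ k, b = Arrow.s k) := by
  cases α with
  | zero => simp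
  | succ β =>
    rw [List.replicate_succ]
    intro b hb
    simp at hb
    subst hb
    exact ⟨Or.inr ⟨i, rfl⟩, Or.inr ⟨i, rfl⟩⟩

lemma spec_ge (i : Fin (n + 1)) :
    ∀ (d : ℕ) (hd : (i : ℕ) + d ≤ n) (α : ℕ),
      Spec i (canon n ⟨(i : ℕ) + d, by omega⟩ i α) ⟨(i : ℕ) + d, by omega⟩ α ∧
      ∀ b ∈ (canon n ⟨(i : ℕ) + d, by omega⟩ i α).head?,
        (∃ k, b = Arrow.p k) ∨ ∃ k, b = Arrow.s k := by
  intro d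
  induction d with
  | zero =>
    intro hd α
    have hF : (⟨(i : ℕ) + 0, by omega⟩ : Fin (n + 1)) = i := Fin.ext (by simp)
    rw [hF, canon_self]
    exact ⟨spec_rep i α, fun b hb => (head_rep i α b hb).1⟩
  | succ d ihd =>
    intro hd α
    have hd' : (i : ℕ) + d ≤ n := by omega
    obtain ⟨ih, ihhead⟩ := ihd hd' α
    have hc := canon_p i ((i : ℕ) + d) (by omega) (by omega) α
    have hF : (⟨(i : ℕ) + (d + 1), by omega⟩ : Fin (n + 1))
        = ⟨(i : ℕ) + d + 1, by omega⟩ := Fin.ext rfl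
    rw [hF, hc]
    constructor
    · have := ih.cons (.p ⟨(i : ℕ) + d, by omega⟩) (Fin.ext rfl)
        (fun b hb hR => by
          rcases ihhead b hb with ⟨k, rfl⟩ | ⟨k, rfl⟩ <;> cases hR)
        (m := α) (by simp [ih.cnt])
      have htgt : (Arrow.p (⟨(i : ℕ) + d, by omega⟩ : Fin n)).tgt
          = (⟨(i : ℕ) + d + 1, by omega⟩ : Fin (n + 1)) := Fin.ext rfl
      rwa [htgt] at this
    · rintro b hb
      simp at hb
      subst hb
      exact Or.inl ⟨_, rfl⟩

lemma spec_le (i : Fin (n + 1)) :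
    ∀ (d : ℕ) (hd : d ≤ (i : ℕ)) (α : ℕ),
      Spec i (canon n ⟨(i : ℕ) - d, by have := i.isLt; omega⟩ i α) ⟨(i : ℕ) - d, by have := i.isLt; omega⟩ α ∧
      ∀ b ∈ (canon n ⟨(i : ℕ) - d, by have := i.isLt; omega⟩ i α).head?,
        (∃ k, b = Arrow.q k) ∨ ∃ k, b = Arrow.s k := by
  intro d
  induction d with
  | zero =>
    intro hd α
    have hF : (⟨(i : ℕ) - 0, by have := i.isLt; omega⟩ : Fin (n + 1)) = i := Fin.ext (by simp)
    rw [hF, canon_self]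
    exact ⟨spec_rep i α, fun b hb => (head_rep i α b hb).2⟩
  | succ d ihd =>
    intro hd α
    have hd' : d ≤ (i : ℕ) := by omega
    obtain ⟨ih, ihhead⟩ := ihd hd' α
    have hc := canon_q i ((i : ℕ) - (d + 1)) (by omega) α
    have hF : (⟨(i : ℕ) - (d + 1) + 1, by have := i.isLt; omega⟩ : Fin (n + 1))
        = ⟨(i : ℕ) - d, by have := i.isLt; omega⟩ := Fin.ext (by simp; omega)
    rw [hF] at hc
    rw [hc]
    constructor
    · have := ih.cons (.q ⟨(i : ℕ) - (d + 1), by have := i.isLt; omega⟩)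
        (Fin.ext (by simp [Arrow.src]; omega))
        (fun b hb hR => by
          rcases ihhead b hb with ⟨k, rfl⟩ | ⟨k, rfl⟩ <;> cases hR)
        (m := α) (by simp [ih.cnt])
      have htgt : (Arrow.q (⟨(i : ℕ) - (d + 1), by have := i.isLt; omega⟩ : Fin n)).tgt
          = (⟨(i : ℕ) - (d + 1), by have := i.isLt; omega⟩ : Fin (n + 1)) := Fin.ext rfl
      rwa [htgt] at this
    · rintro b hb
      simp at hb
      subst hb
      exact Or.inl ⟨_, rfl⟩

lemma spec_canon (j i : Fin (n + 1)) (α : ℕ) : Spec i (canon n j i α) j α := by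
  rcases le_or_gt (i : ℕ) (j : ℕ) with h | h
  · have := (spec_ge i ((j : ℕ) - (i : ℕ)) (by have := j.isLt; omega) α).1
    have hF : (⟨(i : ℕ) + ((j : ℕ) - (i : ℕ)), by have := j.isLt; omega⟩ : Fin (n + 1)) = j :=
      Fin.ext (by simp; omega)
    rwa [hF] at this
  · have := (spec_le i ((i : ℕ) - (j : ℕ)) (by omega) α).1
    have hF : (⟨(i : ℕ) - ((i : ℕ) - (j : ℕ)), by have := i.isLt; omega⟩ : Fin (n + 1)) = j :=
      Fin.ext (by simp; omega)
    rwa [hF] at this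

end Aux

section Fwd
variable {n : ℕ}

lemma forward (v : Fin (n + 1)) :
    ∀ u : List (Arrow n), Composable u → (∀ b ∈ u.getLast?, Arrow.src b = v) → Irred u →
      ∃ (j : Fin (n + 1)) (α : ℕ), u = canon n j v α := by
  intro u
  induction u with
  | nil =>
    intro _ _ _
    exact ⟨v, 0, by rw [canon_self]; rfl⟩
  | cons a l ih =>
    intro hcomp hlast hirr
    obtain ⟨hhead_comp, hcomp'⟩ := List.isChain_cons.mp hcomp
    obtain ⟨hhead_irr, hirr'⟩ := List.isChain_cons.mp hirr
    have hlast' : ∀ b ∈ l.getLast?, Arrow.src b = v := by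
      cases l with
      | nil => simp
      | cons c m =>
        intro b hb
        exact hlast b (by rw [List.getLast?_cons_cons]; exact hb)
    obtain ⟨j', α', rfl⟩ := ih hcomp' hlast' hirr'
    rcases Nat.lt_trichotomy (j' : ℕ) (v : ℕ) with hlt | heq | hgt
    · -- q-run: head of `l` is `q j'`
      have hj'n : (j' : ℕ) < n := by have := v.isLt; omega
      have hc := canon_q v (j' : ℕ) hlt α'
      rw [show (⟨(j' : ℕ), by have := v.isLt; omega⟩ : Fin (n + 1)) = j' from Fin.ext rfl] at hc
      have hsrc : a.src = Arrow.tgt (.q ⟨(j' : ℕ), hj'n⟩) := by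
        apply hhead_comp
        rw [hc]; rfl
      have hred : ¬ RedPair a (.q ⟨(j' : ℕ), hj'n⟩) := by
        apply hhead_irr
        rw [hc]; rfl
      have hval := congrArg Fin.val hsrc
      cases a with
      | p k =>
        exfalso
        apply hred
        have hk : k = ⟨(j' : ℕ), hj'n⟩ := by
          apply Fin.ext
          simpa [Arrow.src, Arrow.tgt] using hval
        rw [hk]
        exact RedPair.pq _
      | q k =>
        have hkn := k.isLt
        have hkv : (k : ℕ) + 1 = (j' : ℕ) := by
          simpa [Arrow.src, Arrow.tgt] using hval
        refine ⟨⟨(k : ℕ), by omega⟩, α', ?_⟩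
        have hc2 := canon_q v (k : ℕ) (by omega) α'
        rw [show (⟨(k : ℕ) + 1, by have := v.isLt; omega⟩ : Fin (n + 1)) = j'
            from Fin.ext (by simpa using hkv)] at hc2
        rw [hc2]
      | s k =>
        exfalso
        apply hred
        have hk : k = Fin.castSucc ⟨(j' : ℕ), hj'n⟩ := by
          apply Fin.ext
          simpa [Arrow.src, Arrow.tgt] using hval
        rw [hk]
        exact RedPair.sq _
    · -- j' = v : l is a power of s
      have hjv : j' = v := Fin.ext heq
      subst hjv
      have hrep : canon n j' j' α' = List.replicate α' (.s j') := canon_self j' α'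
      have hsrc : a.src = j' := by
        cases α' with
        | zero =>
          apply hlast a
          rw [hrep]
          rfl
        | succ β =>
          have := hhead_comp (.s j') (by rw [hrep, List.replicate_succ]; rfl)
          simpa [Arrow.tgt] using this
      have hval := congrArg Fin.val hsrc
      cases a with
      | p k =>
        have hkn := k.isLt
        have hkv : (k : ℕ) = (j' : ℕ) := by
          simpa [Arrow.src] using hval
        have hjn : (j' : ℕ) < n := by omega
        refine ⟨⟨(j' : ℕ) + 1, by omega⟩, α', ?_⟩
        have hc2 := canon_p j' (j' : ℕ) hjn le_rfl α'
        rw [show (⟨(j' : ℕ), by omega⟩ : Fin (n + 1)) = j' from Fin.ext rfl] at hc2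
        rw [hc2]
        have hk : k = ⟨(j' : ℕ), hjn⟩ := Fin.ext hkv
        rw [hk]
      | q k =>
        have hkn := k.isLt
        have hkv : (k : ℕ) + 1 = (j' : ℕ) := by
          simpa [Arrow.src] using hval
        refine ⟨⟨(k : ℕ), by omega⟩, α', ?_⟩
        have hc2 := canon_q j' (k : ℕ) (by omega) α'
        rw [show (⟨(k : ℕ) + 1, by have := j'.isLt; omega⟩ : Fin (n + 1)) = j'
            from Fin.ext (by simpa using hkv)] at hc2
        rw [hc2]
      | s k =>
        have hk : k = j' := hsrc
        subst hk
        refine ⟨k, α' + 1, ?_⟩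
        rw [canon_self, canon_self, List.replicate_succ]
    · -- p-run : head of `l` is `p (j' - 1)`
      have hj1n : (j' : ℕ) - 1 < n := by have := j'.isLt; omega
      have hc := canon_p v ((j' : ℕ) - 1) hj1n (by omega) α'
      rw [show (⟨(j' : ℕ) - 1 + 1, by omega⟩ : Fin (n + 1)) = j'
          from Fin.ext (by simp; omega)] at hc
      have hsrc : a.src = Arrow.tgt (.p ⟨(j' : ℕ) - 1, hj1n⟩) := by
        apply hhead_comp
        rw [hc]; rfl
      have hred : ¬ RedPair a (.p ⟨(j' : ℕ) - 1, hj1n⟩) := by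
        apply hhead_irr
        rw [hc]; rfl
      have hsrc2 : a.src = j' := by
        rw [hsrc]
        apply Fin.ext
        show (j' : ℕ) - 1 + 1 = (j' : ℕ)
        omega
      cases a with
      | p k =>
        have hkn := k.isLt
        have hkv : (k : ℕ) = (j' : ℕ) := congrArg Fin.val hsrc2
        have hjn : (j' : ℕ) < n := by omega
        refine ⟨⟨(j' : ℕ) + 1, by omega⟩, α', ?_⟩
        have hc2 := canon_p v (j' : ℕ) hjn (by omega) α'
        rw [show (⟨(j' : ℕ), by omega⟩ : Fin (n + 1)) = j' from Fin.ext rfl] at hc2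
        rw [hc2]
        have hk : k = ⟨(j' : ℕ), hjn⟩ := Fin.ext hkv
        rw [hk]
      | q k =>
        exfalso
        apply hred
        have hkv : (k : ℕ) + 1 = (j' : ℕ) := congrArg Fin.val hsrc2
        have hk : k = ⟨(j' : ℕ) - 1, hj1n⟩ := by
          apply Fin.ext
          show (k : ℕ) = (j' : ℕ) - 1
          omega
        rw [hk]
        exact RedPair.qp _
      | s k =>
        exfalso
        apply hred
        have hkv : (k : ℕ) = (j' : ℕ) := congrArg Fin.val hsrc2
        have hk : k = Fin.succ ⟨(j' : ℕ) - 1, hj1n⟩ := by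
          apply Fin.ext
          show (k : ℕ) = (j' : ℕ) - 1 + 1
          omega
        rw [hk]
        exact RedPair.sp _

end Fwd

/-- A path in the KLRW quiver is irreducible iff it is of the form `a_{j,i}s^α`; in
particular the based irreducible paths are in bijection with the triples
`(j, i, α) ∈ {0,…,n} × {0,…,n} × ℕ`. -/
theorem irreducible_paths_classification (n : ℕ) (hn : 0 < n) :
    (∀ (v : Fin (n + 1)) (u : List (Arrow n)), IsPathFrom v u →
      (Irred u ↔ ∃ (j : Fin (n + 1)) (α : ℕ), u = canon n j v α)) ∧
    Nonempty
      ({x : Fin (n + 1) × List (Arrow n) // IsPathFrom x.1 x.2 ∧ Irred x.2}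
        ≃ Fin (n + 1) × Fin (n + 1) × ℕ) := by
  constructor
  · intro v u hu
    constructor
    · exact fun hirr => forward v u hu.1 hu.2 hirr
    · rintro ⟨j, α, rfl⟩
      exact (spec_canon j v α).irr
  · refine ⟨(Equiv.ofBijective (fun t : Fin (n + 1) × Fin (n + 1) × ℕ =>
      (⟨(t.2.1, canon n t.1 t.2.1 t.2.2),
        ⟨⟨(spec_canon t.1 t.2.1 t.2.2).comp, (spec_canon t.1 t.2.1 t.2.2).last⟩,
          (spec_canon t.1 t.2.1 t.2.2).irr⟩⟩ :
        {x : Fin (n + 1) × List (Arrow n) // IsPathFrom x.1 x.2 ∧ Irred x.2})) ?_).symm⟩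
    constructor
    · rintro ⟨j, i, α⟩ ⟨j', i', α'⟩ h
      simp only [Subtype.mk.injEq, Prod.mk.injEq] at h
      obtain ⟨hi, hc⟩ := h
      subst hi
      have hj : j = j' := by
        have := congrArg (endV i) hc
        rwa [(spec_canon j i α).endv, (spec_canon j' i α').endv] at this
      have hα : α = α' := by
        have := congrArg countS hc
        rwa [(spec_canon j i α).cnt, (spec_canon j' i α').cnt] at this
      simp [hj, hα]
    · rintro ⟨⟨v, u⟩, ⟨hpath, hirr⟩⟩
      obtain ⟨j, α, rfl⟩ := forward v u hpath.1 hpath.2 hirr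
      exact ⟨(j, v, α), rfl⟩
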